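/- There exists a unique ℂ-algebra homomorphism α : Cl_n → Cl_n ⊗_ℂ F(Ω_n) satisfying α(s_i) = s_i ⊗ ε_i for every i ∈ {1,…,n}. This homomorphism satisfies α(s_A) = s_A ⊗ w_A for every subset A of {1,…,n}, it is injective, and its fixed-point subalgebra is trivial: {x ∈ Cl_n : α(x) = x ⊗ 1} = ℂ·1 (ergodicity of the action of the discrete hypercube on the fermion algebra). -/

import Mathlib

open Finset TensorProduct

/-- The generator `s_i = ι(e_i)` of the Clifford algebra of a quadratic form `Q` on `ℂ^n`. -/
noncomputable def sGen {n : ℕ} (Q : QuadraticForm ℂ (Fin n → ℂ)) (i : Fin n) :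
    CliffordAlgebra Q :=
  CliffordAlgebra.ι Q (Pi.single i 1)

/-- For a subset `A = {i₁ < … < i_k}` of `{1,…,n}`, the element
`s_A = s_{i₁} ⋯ s_{i_k}` of the Clifford algebra, with `s_∅ = 1`. -/
noncomputable def sSet {n : ℕ} (Q : QuadraticForm ℂ (Fin n → ℂ)) (A : Finset (Fin n)) :
    CliffordAlgebra Q :=
  ((A.sort (· ≤ ·)).map (sGen Q)).prod

section Aux

variable {n : ℕ} {Q : QuadraticForm ℂ (Fin n → ℂ)}
  (hQ : ∀ x : Fin n → ℂ, Q x = ∑ i : Fin n, x i ^ 2)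

noncomputable def prodS (Q : QuadraticForm ℂ (Fin n → ℂ)) (l : List (Fin n)) :
    CliffordAlgebra Q := (l.map (sGen Q)).prod

lemma prodS_nil : prodS Q [] = 1 := rfl
lemma prodS_cons (i : Fin n) (l : List (Fin n)) :
    prodS Q (i :: l) = sGen Q i * prodS Q l := by simp [prodS]
lemma prodS_append (l₁ l₂ : List (Fin n)) :
    prodS Q (l₁ ++ l₂) = prodS Q l₁ * prodS Q l₂ := by simp [prodS]

include hQ

lemma sGen_sq (i : Fin n) : sGen Q i * sGen Q i = 1 := by
  rw [sGen, CliffordAlgebra.ι_sq_scalar, hQ]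
  rw [Finset.sum_eq_single i (fun j _ hj => by simp [Pi.single_eq_of_ne hj]) (by simp)]
  simp

lemma sGen_anti {i j : Fin n} (h : i ≠ j) :
    sGen Q i * sGen Q j = -(sGen Q j * sGen Q i) := by
  have hpolar : QuadraticMap.polar Q (Pi.single i 1) (Pi.single j 1) = 0 := by
    rw [QuadraticMap.polar, hQ, hQ, hQ]
    rw [← Finset.sum_sub_distrib, ← Finset.sum_sub_distrib]
    apply Finset.sum_eq_zero
    intro k _
    rcases eq_or_ne k i with rfl | hki
    · simp [Pi.single_eq_of_ne h]
    · rcases eq_or_ne k j with rfl | hkj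
      · simp [Pi.single_eq_of_ne hki]
      · simp [Pi.single_eq_of_ne hki, Pi.single_eq_of_ne hkj]
  have := CliffordAlgebra.ι_mul_ι_add_swap (Q := Q) (Pi.single i 1) (Pi.single j 1)
  rw [hpolar, map_zero] at this
  rw [sGen, sGen]
  linear_combination (norm := noncomm_ring) this

lemma sGen_swap (i : Fin n) : ∀ (u : List (Fin n)), i ∉ u →
    sGen Q i * prodS Q u = ((-1 : ℂ) ^ u.length) • (prodS Q u * sGen Q i)
  | [], _ => by simp [prodS_nil]
  | j :: u, hmem => by
    have hij : i ≠ j := fun h => hmem (h ▸ List.mem_cons_self)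
    have hu : i ∉ u := fun h => hmem (List.mem_cons_of_mem _ h)
    rw [prodS_cons, ← mul_assoc, sGen_anti hQ hij, neg_mul, mul_assoc,
      sGen_swap i u hu, List.length_cons]
    rw [mul_smul_comm]
    rw [← neg_smul]
    ring_nf
    rw [mul_assoc]

omit hQ in
lemma mem_split_first {i : Fin n} : ∀ {t : List (Fin n)}, i ∈ t →
    ∃ u v, t = u ++ i :: v ∧ i ∉ u
  | [], h => absurd h List.not_mem_nil
  | j :: r, h => by
    rcases eq_or_ne i j with rfl | hij
    · exact ⟨[], r, rfl, List.not_mem_nil⟩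
    · have : i ∈ r := by
        rcases List.mem_cons.1 h with h' | h'
        · exact absurd h' hij
        · exact h'
      obtain ⟨u, v, huv, hu⟩ := mem_split_first this
      exact ⟨j :: u, v, by rw [huv]; rfl, by
        simp only [List.mem_cons, not_or]; exact ⟨hij, hu⟩⟩

lemma prodS_even : ∀ (m : ℕ) (l : List (Fin n)), l.length = m →
    (∀ i : Fin n, Even (l.count i)) →
    ∃ c : ℂ, prodS Q l = algebraMap ℂ _ c := by
  intro m
  induction m using Nat.strong_induction_on with
  | _ m ih =>
    intro l hlen hcount
    match l, hlen with
    | [], _ => exact ⟨1, by simp [prodS_nil]⟩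
    | i :: t, hlen =>
      have hit : i ∈ t := by
        have := hcount i
        rw [List.count_cons_self] at this
        by_contra hmem
        rw [List.count_eq_zero_of_not_mem hmem] at this
        simp at this
      obtain ⟨u, v, rfl, hu⟩ := mem_split_first hit
      have key : prodS Q (i :: (u ++ i :: v)) = ((-1 : ℂ) ^ u.length) • prodS Q (u ++ v) := by
        rw [prodS_cons, prodS_append, ← mul_assoc, prodS_cons, ← mul_assoc,
          sGen_swap hQ i u hu, smul_mul_assoc, smul_mul_assoc, mul_assoc (prodS Q u),
          sGen_sq hQ, mul_one, ← prodS_append]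
      have hcount' : ∀ j : Fin n, Even ((u ++ v).count j) := by
        intro j
        have := hcount j
        rcases eq_or_ne j i with rfl | hji
        · simp only [List.count_append, List.count_cons_self] at this ⊢
          rw [Nat.even_iff] at this ⊢; omega
        · simp only [List.count_append, List.count_cons_of_ne hji.symm] at this ⊢
          exact this
      have hlt : (u ++ v).length < m := by
        subst hlen
        simp only [List.length_cons, List.length_append]
        omega
      obtain ⟨c, hc⟩ := ih _ hlt (u ++ v) rfl hcount'
      exact ⟨(-1 : ℂ) ^ u.length * c, by
        rw [key, hc, map_mul, ← Algebra.smul_def]⟩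

omit hQ in
lemma ι_eq_sum (v : Fin n → ℂ) :
    CliffordAlgebra.ι Q v = ∑ i : Fin n, v i • sGen Q i := by
  have hv : v = ∑ i : Fin n, v i • (Pi.single i 1 : Fin n → ℂ) := by
    funext j
    rw [Finset.sum_apply]
    rw [Finset.sum_eq_single j (fun i _ hij => by simp [Pi.single_eq_of_ne (Ne.symm hij)])
      (by simp)]
    simp
  conv_lhs => rw [hv]
  rw [map_sum]
  simp [sGen]

omit hQ in
lemma spanProdS (x : CliffordAlgebra Q) :
    x ∈ Submodule.span ℂ {y : CliffordAlgebra Q | ∃ l, y = prodS Q l} := by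
  set S := Submodule.span ℂ {y : CliffordAlgebra Q | ∃ l, y = prodS Q l} with hS
  induction x using CliffordAlgebra.induction with
  | algebraMap r =>
    rw [Algebra.algebraMap_eq_smul_one]
    exact S.smul_mem r (Submodule.subset_span ⟨[], rfl⟩)
  | ι v =>
    rw [ι_eq_sum]
    exact S.sum_mem fun i _ => S.smul_mem _
      (Submodule.subset_span ⟨[i], by simp [prodS]⟩)
  | mul a b ha hb =>
    have h2 : S * S ≤ S := by
      rw [hS, Submodule.span_mul_span]
      apply Submodule.span_le.2
      rintro _ ⟨_, ⟨l₁, rfl⟩, _, ⟨l₂, rfl⟩, rfl⟩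
      exact Submodule.subset_span ⟨l₁ ++ l₂, (prodS_append l₁ l₂).symm⟩
    exact h2 (Submodule.mul_mem_mul ha hb)
  | add a b ha hb => exact S.add_mem ha hb

omit hQ in
lemma hom_ext_sGen {B : Type*} [Semiring B] [Algebra ℂ B]
    {f g : CliffordAlgebra Q →ₐ[ℂ] B}
    (h : ∀ i, f (sGen Q i) = g (sGen Q i)) : f = g := by
  apply CliffordAlgebra.hom_ext
  apply LinearMap.ext
  intro v
  simp only [LinearMap.comp_apply, AlgHom.toLinearMap_apply]
  rw [ι_eq_sum, map_sum, map_sum]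
  exact Finset.sum_congr rfl fun i _ => by rw [map_smul, map_smul, h]

noncomputable def eps (n : ℕ) (i : Fin n) : (Fin n → ℤˣ) → ℂ :=
  fun ω => ((ω i : ℤ) : ℂ)

noncomputable def tGen (Q : QuadraticForm ℂ (Fin n → ℂ)) (i : Fin n) :
    CliffordAlgebra Q ⊗[ℂ] ((Fin n → ℤˣ) → ℂ) :=
  sGen Q i ⊗ₜ[ℂ] eps n i

omit hQ in
lemma eps_sq (i : Fin n) : eps n i * eps n i = 1 := by
  funext ω
  show ((ω i : ℤ) : ℂ) * ((ω i : ℤ) : ℂ) = 1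
  rw [← Int.cast_mul, ← Units.val_mul, Int.units_mul_self]
  simp

lemma tGen_sq (i : Fin n) : tGen Q i * tGen Q i = 1 := by
  rw [tGen, Algebra.TensorProduct.tmul_mul_tmul, sGen_sq hQ, eps_sq,
    Algebra.TensorProduct.one_def]

lemma tGen_anti {i j : Fin n} (h : i ≠ j) :
    tGen Q i * tGen Q j = -(tGen Q j * tGen Q i) := by
  rw [tGen, tGen, Algebra.TensorProduct.tmul_mul_tmul,
    Algebra.TensorProduct.tmul_mul_tmul, sGen_anti hQ h, mul_comm (eps n i),
    neg_tmul]

noncomputable def fLin (Q : QuadraticForm ℂ (Fin n → ℂ)) :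
    (Fin n → ℂ) →ₗ[ℂ] CliffordAlgebra Q ⊗[ℂ] ((Fin n → ℤˣ) → ℂ) where
  toFun x := ∑ i : Fin n, x i • tGen Q i
  map_add' x y := by
    simp only [Pi.add_apply, add_smul, Finset.sum_add_distrib]
  map_smul' c x := by
    simp only [Pi.smul_apply, smul_eq_mul, RingHom.id_apply, Finset.smul_sum, smul_smul]

lemma fLin_sq (x : Fin n → ℂ) :
    fLin Q x * fLin Q x = algebraMap ℂ _ (Q x) := by
  classical
  have hmul : fLin Q x * fLin Q x
      = ∑ i : Fin n, ∑ j : Fin n, (x i * x j) • (tGen Q i * tGen Q j) := by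
    show (∑ i : Fin n, x i • tGen Q i) * (∑ j : Fin n, x j • tGen Q j) = _
    rw [Finset.sum_mul_sum]
    exact Finset.sum_congr rfl fun i _ => Finset.sum_congr rfl fun j _ =>
      smul_mul_smul_comm (x i) (tGen Q i) (x j) (tGen Q j)
  set T := CliffordAlgebra Q ⊗[ℂ] ((Fin n → ℤˣ) → ℂ) with hT
  have hsymm : ∀ i j : Fin n, (x i * x j) • (tGen Q i * tGen Q j)
        + (x j * x i) • (tGen Q j * tGen Q i)
      = if i = j then ((2 : ℂ) * x i ^ 2) • (1 : T) else 0 := by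
    intro i j
    rcases eq_or_ne i j with rfl | hij
    · rw [if_pos rfl, tGen_sq hQ, ← add_smul]
      ring_nf
    · rw [if_neg hij, tGen_anti hQ hij, smul_neg, mul_comm (x i)]
      exact neg_add_cancel _
  have hSS : (∑ i : Fin n, ∑ j : Fin n, (x i * x j) • (tGen Q i * tGen Q j))
        + (∑ i : Fin n, ∑ j : Fin n, (x i * x j) • (tGen Q i * tGen Q j))
      = (∑ i : Fin n, (x i ^ 2) • (1 : T)) + (∑ i : Fin n, (x i ^ 2) • (1 : T)) := by
    nth_rewrite 1 [Finset.sum_comm]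
    rw [← Finset.sum_add_distrib]
    rw [Finset.sum_congr rfl fun i _ => (Finset.sum_add_distrib).symm]
    rw [Finset.sum_congr rfl fun i (_ : i ∈ univ) =>
      Finset.sum_congr rfl fun j (_ : j ∈ univ) => hsymm j i]
    rw [← Finset.sum_add_distrib]
    refine Finset.sum_congr rfl fun i _ => ?_
    rw [Finset.sum_ite_eq' univ i fun j => ((2 : ℂ) * x j ^ 2) • (1 : T)]
    rw [if_pos (Finset.mem_univ i), ← add_smul]
    ring_nf
  have hSR : (∑ i : Fin n, ∑ j : Fin n, (x i * x j) • (tGen Q i * tGen Q j))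
      = ∑ i : Fin n, (x i ^ 2) • (1 : T) := by
    have h2 : ∀ y : T, y = (2⁻¹ : ℂ) • (y + y) := fun y => by
      rw [← two_smul ℂ, smul_smul]; norm_num
    rw [h2 (∑ i : Fin n, ∑ j : Fin n, (x i * x j) • (tGen Q i * tGen Q j)), hSS,
      ← h2]
  rw [hmul, hSR, hQ, map_sum]
  exact Finset.sum_congr rfl fun i _ => (Algebra.algebraMap_eq_smul_one _).symm

lemma exists_alpha :
    ∃ α : CliffordAlgebra Q →ₐ[ℂ] (CliffordAlgebra Q ⊗[ℂ] ((Fin n → ℤˣ) → ℂ)),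
      ∀ i : Fin n, α (sGen Q i) = tGen Q i := by
  refine ⟨CliffordAlgebra.lift Q ⟨fLin Q, fLin_sq hQ⟩, fun i => ?_⟩
  rw [sGen, CliffordAlgebra.lift_ι_apply]
  show (∑ j : Fin n, (Pi.single i 1 : Fin n → ℂ) j • tGen Q j) = tGen Q i
  rw [Finset.sum_eq_single i (fun j _ hj => by simp [Pi.single_eq_of_ne hj]) (by simp)]
  simp

section alphaprops

variable {α : CliffordAlgebra Q →ₐ[ℂ] (CliffordAlgebra Q ⊗[ℂ] ((Fin n → ℤˣ) → ℂ))}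
  (hα : ∀ i : Fin n, α (sGen Q i) = tGen Q i)

omit hQ
include hα

lemma alpha_prodS : ∀ l : List (Fin n),
    α (prodS Q l) = prodS Q l ⊗ₜ[ℂ] ((l.map (eps n)).prod)
  | [] => by simp [prodS_nil, Algebra.TensorProduct.one_def]
  | i :: t => by
    rw [prodS_cons, map_mul, hα, alpha_prodS t, tGen,
      Algebra.TensorProduct.tmul_mul_tmul, ← prodS_cons, List.map_cons,
      List.prod_cons]

omit hα

lemma list_prod_apply (ω : Fin n → ℤˣ) : ∀ l : List ((Fin n → ℤˣ) → ℂ),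
    l.prod ω = (l.map (fun f => f ω)).prod
  | [] => rfl
  | f :: t => by rw [List.prod_cons, Pi.mul_apply, list_prod_apply ω t,
      List.map_cons, List.prod_cons]

include hα

lemma alpha_sSet (A : Finset (Fin n)) :
    α (sSet Q A) = sSet Q A ⊗ₜ[ℂ] (fun ω : Fin n → ℤˣ => ∏ i ∈ A, ((ω i : ℤ) : ℂ)) := by
  have h1 : sSet Q A = prodS Q (A.sort (· ≤ ·)) := rfl
  rw [h1, alpha_prodS hα]
  congr 1
  funext ω
  rw [list_prod_apply, List.map_map]
  have h2 : ((A.sort (· ≤ ·)).map ((fun f => f ω) ∘ eps n)).prod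
      = Multiset.prod (Multiset.map (fun i => ((ω i : ℤ) : ℂ)) (A.sort (· ≤ ·) : Multiset (Fin n))) := by
    rw [Multiset.map_coe, Multiset.prod_coe]
    rfl
  rw [h2, Finset.sort_eq]
  rfl

end alphaprops

noncomputable def rho (Q : QuadraticForm ℂ (Fin n → ℂ))
    (α : CliffordAlgebra Q →ₐ[ℂ] (CliffordAlgebra Q ⊗[ℂ] ((Fin n → ℤˣ) → ℂ)))
    (ω : Fin n → ℤˣ) : CliffordAlgebra Q →ₐ[ℂ] CliffordAlgebra Q :=
  (Algebra.TensorProduct.rid ℂ ℂ (CliffordAlgebra Q)).toAlgHom.comp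
    ((Algebra.TensorProduct.map (AlgHom.id ℂ _)
      (Pi.evalAlgHom ℂ (fun _ : Fin n → ℤˣ => ℂ) ω)).comp α)

section rhoprops

variable {α : CliffordAlgebra Q →ₐ[ℂ] (CliffordAlgebra Q ⊗[ℂ] ((Fin n → ℤˣ) → ℂ))}
  (hα : ∀ i : Fin n, α (sGen Q i) = tGen Q i)

omit hQ
include hα

lemma rho_sGen (ω : Fin n → ℤˣ) (i : Fin n) :
    rho Q α ω (sGen Q i) = ((ω i : ℤ) : ℂ) • sGen Q i := by
  rw [rho]
  simp only [AlgEquiv.toAlgHom_eq_coe, AlgHom.coe_comp, AlgHom.coe_coe,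
    Function.comp_apply, hα, tGen]
  rw [Algebra.TensorProduct.map_tmul, AlgEquiv.coe_toAlgHom, Algebra.TensorProduct.rid_tmul]
  rfl

lemma rho_prodS (ω : Fin n → ℤˣ) : ∀ l : List (Fin n),
    rho Q α ω (prodS Q l) = ((l.map fun i => ((ω i : ℤ) : ℂ)).prod) • prodS Q l
  | [] => by simp [prodS_nil]
  | i :: t => by
    rw [prodS_cons, map_mul, rho_sGen hα, rho_prodS ω t, smul_mul_smul_comm,
      ← prodS_cons, List.map_cons, List.prod_cons]

omit hα

lemma rho_fixed (ω : Fin n → ℤˣ) {x : CliffordAlgebra Q}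
    (hx : α x = x ⊗ₜ[ℂ] (1 : (Fin n → ℤˣ) → ℂ)) : rho Q α ω x = x := by
  rw [rho]
  simp only [AlgEquiv.toAlgHom_eq_coe, AlgHom.coe_comp, AlgHom.coe_coe,
    Function.comp_apply, hx]
  rw [Algebra.TensorProduct.map_tmul, AlgEquiv.coe_toAlgHom, Algebra.TensorProduct.rid_tmul]
  simp

end rhoprops

omit hQ in
lemma flip_prod (i0 : Fin n) (ω : Fin n → ℤˣ) : ∀ l : List (Fin n),
    (l.map fun i => (((Function.update ω i0 (-(ω i0))) i : ℤ) : ℂ)).prod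
      = (-1 : ℂ) ^ (l.count i0) * (l.map fun i => ((ω i : ℤ) : ℂ)).prod
  | [] => by simp
  | j :: t => by
    rw [List.map_cons, List.prod_cons, flip_prod i0 ω t, List.map_cons,
      List.prod_cons]
    rcases eq_or_ne j i0 with rfl | hj
    · rw [Function.update_self, List.count_cons_self, pow_succ]
      push_cast
      ring
    · rw [Function.update_of_ne hj, List.count_cons_of_ne hj]
      ring

omit hQ in
lemma sum_eps_prod_zero {l : List (Fin n)} {i0 : Fin n} (h : Odd (l.count i0)) :
    ∑ ω : Fin n → ℤˣ, (l.map fun i => ((ω i : ℤ) : ℂ)).prod = 0 := by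
  classical
  set σ : (Fin n → ℤˣ) → (Fin n → ℤˣ) := fun ω => Function.update ω i0 (-(ω i0)) with hσ
  have hinv : Function.Involutive σ := by
    intro ω
    funext j
    rcases eq_or_ne j i0 with rfl | hj
    · simp [hσ, Function.update_self]
    · simp [hσ, Function.update_of_ne hj]
  have he : ∑ ω : Fin n → ℤˣ, (l.map fun i => ((ω i : ℤ) : ℂ)).prod
      = ∑ ω : Fin n → ℤˣ, (l.map fun i => (((σ ω) i : ℤ) : ℂ)).prod :=
    (Equiv.sum_comp hinv.toPerm fun ω => (l.map fun i => ((ω i : ℤ) : ℂ)).prod).symm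
  have hneg : ∀ ω : Fin n → ℤˣ, (l.map fun i => (((σ ω) i : ℤ) : ℂ)).prod
      = -(l.map fun i => ((ω i : ℤ) : ℂ)).prod := by
    intro ω
    rw [hσ, flip_prod, Odd.neg_one_pow h, neg_one_mul]
  rw [Finset.sum_congr rfl fun ω _ => hneg ω, Finset.sum_neg_distrib] at he
  have h2 : (2 : ℂ) * ∑ ω : Fin n → ℤˣ, (l.map fun i => ((ω i : ℤ) : ℂ)).prod = 0 := by
    linear_combination he
  exact (mul_eq_zero.mp h2).resolve_left two_ne_zero

include hQ in
lemma fixed_scalar {α : CliffordAlgebra Q →ₐ[ℂ] (CliffordAlgebra Q ⊗[ℂ] ((Fin n → ℤˣ) → ℂ))}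
    (hα : ∀ i : Fin n, α (sGen Q i) = tGen Q i) {x : CliffordAlgebra Q}
    (hx : α x = x ⊗ₜ[ℂ] (1 : (Fin n → ℤˣ) → ℂ)) :
    ∃ c : ℂ, x = algebraMap ℂ (CliffordAlgebra Q) c := by
  classical
  have hTspan : ∀ y : CliffordAlgebra Q,
      (∑ ω : Fin n → ℤˣ, rho Q α ω y) ∈ Submodule.span ℂ {(1 : CliffordAlgebra Q)} := by
    intro y
    induction spanProdS y using Submodule.span_induction with
    | mem z hz =>
      obtain ⟨l, rfl⟩ := hz
      rw [Finset.sum_congr rfl fun ω _ => rho_prodS hα ω l, ← Finset.sum_smul]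
      by_cases hc : ∀ i : Fin n, Even (l.count i)
      · obtain ⟨c, hcp⟩ := prodS_even hQ l.length l rfl hc
        rw [hcp, Algebra.algebraMap_eq_smul_one, smul_smul]
        exact Submodule.smul_mem _ _ (Submodule.mem_span_singleton_self 1)
      · push_neg at hc
        obtain ⟨i0, hi0⟩ := hc
        rw [sum_eps_prod_zero (Nat.not_even_iff_odd.mp hi0), zero_smul]
        exact Submodule.zero_mem _
    | zero =>
      simp only [map_zero, Finset.sum_const_zero]
      exact Submodule.zero_mem _
    | add a b _ _ ha hb =>
      simp only [map_add, Finset.sum_add_distrib]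
      exact Submodule.add_mem _ ha hb
    | smul c a _ ha =>
      simp only [map_smul, ← Finset.smul_sum]
      exact Submodule.smul_mem _ _ ha
  have hsum : ∑ ω : Fin n → ℤˣ, rho Q α ω x
      = (Fintype.card (Fin n → ℤˣ) : ℂ) • x := by
    rw [Finset.sum_congr rfl fun ω _ => rho_fixed ω hx, Finset.sum_const,
      Finset.card_univ, Nat.cast_smul_eq_nsmul]
  have hcard : (Fintype.card (Fin n → ℤˣ) : ℂ) ≠ 0 := by
    exact_mod_cast Fintype.card_ne_zero
  have hx2 : x = (Fintype.card (Fin n → ℤˣ) : ℂ)⁻¹ • ∑ ω : Fin n → ℤˣ, rho Q α ω x := by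
    rw [hsum, smul_smul, inv_mul_cancel₀ hcard, one_smul]
  have hxs : x ∈ Submodule.span ℂ {(1 : CliffordAlgebra Q)} := by
    rw [hx2]
    exact Submodule.smul_mem _ _ (hTspan x)
  obtain ⟨c, hc⟩ := Submodule.mem_span_singleton.mp hxs
  exact ⟨c, by rw [← hc, Algebra.algebraMap_eq_smul_one]⟩

end Aux

/-- There is a unique `ℂ`-algebra homomorphism `α : Cl_n → Cl_n ⊗[ℂ] F(Ω_n)` with
`α(s_i) = s_i ⊗ ε_i` for all `i`, where `F(Ω_n)` is the algebra of all functions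
`Ω_n = {-1,1}^n → ℂ` (here `Ω_n` is modeled as `Fin n → ℤˣ`) and `ε_i` is the `i`-th
coordinate function. Moreover any such `α` satisfies `α(s_A) = s_A ⊗ w_A` for all
`A ⊆ {1,…,n}` (where `w_A = ∏_{i∈A} ε_i` is the Walsh function), is injective, and
its fixed-point subalgebra `{x : α(x) = x ⊗ 1}` is `ℂ·1` (ergodicity). -/
theorem stmt_9 (n : ℕ) (Q : QuadraticForm ℂ (Fin n → ℂ))
    (hQ : ∀ x : Fin n → ℂ, Q x = ∑ i : Fin n, x i ^ 2) :
    (∃! α : CliffordAlgebra Q →ₐ[ℂ] (CliffordAlgebra Q ⊗[ℂ] ((Fin n → ℤˣ) → ℂ)),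
      ∀ i : Fin n, α (sGen Q i) = sGen Q i ⊗ₜ[ℂ] (fun ε : Fin n → ℤˣ => ((ε i : ℤ) : ℂ))) ∧
    (∀ α : CliffordAlgebra Q →ₐ[ℂ] (CliffordAlgebra Q ⊗[ℂ] ((Fin n → ℤˣ) → ℂ)),
      (∀ i : Fin n, α (sGen Q i) = sGen Q i ⊗ₜ[ℂ] (fun ε : Fin n → ℤˣ => ((ε i : ℤ) : ℂ))) →
      (∀ A : Finset (Fin n),
        α (sSet Q A) = sSet Q A ⊗ₜ[ℂ] (fun ε : Fin n → ℤˣ => ∏ i ∈ A, ((ε i : ℤ) : ℂ))) ∧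
      Function.Injective α ∧
      (∀ x : CliffordAlgebra Q,
        α x = x ⊗ₜ[ℂ] (1 : (Fin n → ℤˣ) → ℂ) ↔
          ∃ c : ℂ, x = algebraMap ℂ (CliffordAlgebra Q) c)) := by
  obtain ⟨α₀, hα₀⟩ := exists_alpha hQ
  constructor
  · refine ⟨α₀, fun i => hα₀ i, fun β hβ => hom_ext_sGen fun i => ?_⟩
    rw [hβ i]
    exact (hα₀ i).symm
  · intro α hαgen
    have hα' : ∀ i : Fin n, α (sGen Q i) = tGen Q i := fun i => hαgen i
    refine ⟨fun A => alpha_sSet hα' A, ?_, fun x => ⟨fun hx => fixed_scalar hQ hα' hx, ?_⟩⟩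
    · -- injectivity
      set β : (CliffordAlgebra Q ⊗[ℂ] ((Fin n → ℤˣ) → ℂ)) →ₐ[ℂ] CliffordAlgebra Q :=
        (Algebra.TensorProduct.rid ℂ ℂ (CliffordAlgebra Q)).toAlgHom.comp
          (Algebra.TensorProduct.map (AlgHom.id ℂ _)
            (Pi.evalAlgHom ℂ (fun _ : Fin n → ℤˣ => ℂ) (fun _ => 1))) with hβ
      have hid : β.comp α = AlgHom.id ℂ (CliffordAlgebra Q) := by
        refine hom_ext_sGen fun i => ?_
        rw [AlgHom.comp_apply, hα' i, AlgHom.id_apply, hβ, tGen]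
        simp only [AlgEquiv.toAlgHom_eq_coe, AlgHom.coe_comp, AlgHom.coe_coe,
          Function.comp_apply]
        rw [Algebra.TensorProduct.map_tmul, AlgEquiv.coe_toAlgHom, Algebra.TensorProduct.rid_tmul]
        show eps n i (fun _ => 1) • (AlgHom.id ℂ _) (sGen Q i) = sGen Q i
        simp [eps]
      intro a b hab
      have := congrArg β hab
      calc a = (β.comp α) a := by rw [hid]; rfl
        _ = (β.comp α) b := this
        _ = b := by rw [hid]; rfl
    · rintro ⟨c, rfl⟩
      rw [AlgHom.commutes, Algebra.TensorProduct.algebraMap_apply]
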